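/- If f is an orientation reversing permutation of a finite affine point set in general position on S², then f ∘ f is the identity. -/

import Mathlib

open scoped RealInnerProductSpace

noncomputable section

abbrev E3 := EuclideanSpace ℝ (Fin 3)

/-- Determinant of the 3×3 matrix whose rows are `p`, `q`, `r`. -/
def det3 (p q r : E3) : ℝ := Matrix.det (Matrix.of ![fun i => p i, fun i => q i, fun i => r i])

/-- The orientation `sgn(p,q,r)` of a triple of points: the sign of `det3 p q r`. -/
def sgn3 (p q r : E3) : ℝ := Real.sign (det3 p q r)

/-- An affine set: a finite subset of the unit sphere contained in an open hemisphere. -/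
def IsAffineSet (A : Set E3) : Prop :=
  A.Finite ∧ A ⊆ Metric.sphere (0 : E3) 1 ∧ ∃ v : E3, ∀ p ∈ A, 0 < ⟪v, p⟫

/-- General position for an affine set: no three of its points are coplanar with the origin. -/
def GenPos (A : Set E3) : Prop :=
  ∀ p ∈ A, ∀ q ∈ A, ∀ r ∈ A, p ≠ q → p ≠ r → q ≠ r → det3 p q r ≠ 0


lemma det3_eq (p q r : E3) : det3 p q r =
    p 0 * q 1 * r 2 - p 0 * q 2 * r 1 - p 1 * q 0 * r 2 + p 1 * q 2 * r 0
      + p 2 * q 0 * r 1 - p 2 * q 1 * r 0 := by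
  simp [det3, Matrix.det_fin_three]

lemma det3_cyc (p q r : E3) : det3 q r p = det3 p q r := by
  rw [det3_eq, det3_eq]; ring

lemma det3_swap12 (p q r : E3) : det3 q p r = -det3 p q r := by
  rw [det3_eq, det3_eq]; ring

lemma det3_swap13 (p q r : E3) : det3 r q p = -det3 p q r := by
  rw [det3_eq, det3_eq]; ring

lemma det3_swap23 (p q r : E3) : det3 p r q = -det3 p q r := by
  rw [det3_eq, det3_eq]; ring

lemma det3_self12 (p r : E3) : det3 p p r = 0 := by rw [det3_eq]; ring
lemma det3_self13 (p q : E3) : det3 p q p = 0 := by rw [det3_eq]; ring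
lemma det3_self23 (p q : E3) : det3 p q q = 0 := by rw [det3_eq]; ring

lemma inner3 (v w : E3) : ⟪v, w⟫ = v 0 * w 0 + v 1 * w 1 + v 2 * w 2 := by
  simp [PiLp.inner_apply, Fin.sum_univ_three]; ring

/-- central projection onto the plane `⟪v,·⟫ = 1`. -/
def prj (v x : E3) : E3 := (⟪v, x⟫)⁻¹ • x

lemma prj_apply (v x : E3) (i : Fin 3) : prj v x i = (⟪v, x⟫)⁻¹ * x i := by
  simp [prj]

lemma inner_prj (v x : E3) (hx : 0 < ⟪v, x⟫) : ⟪v, prj v x⟫ = 1 := by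
  rw [prj, real_inner_smul_right, inv_mul_cancel₀ (ne_of_gt hx)]

/-- signed determinant on projected points -/
def Dd (v p q r : E3) : ℝ := det3 (prj v p) (prj v q) (prj v r)

lemma dd_eq (v p q r : E3) :
    Dd v p q r = (⟪v,p⟫)⁻¹ * (⟪v,q⟫)⁻¹ * (⟪v,r⟫)⁻¹ * det3 p q r := by
  rw [Dd, det3_eq, det3_eq]
  simp only [prj_apply]; ring

lemma dd_pos_iff (v p q r : E3) (hp : 0 < ⟪v,p⟫) (hq : 0 < ⟪v,q⟫) (hr : 0 < ⟪v,r⟫) :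
    0 < Dd v p q r ↔ 0 < det3 p q r := by
  rw [dd_eq]
  have h : 0 < (⟪v,p⟫)⁻¹ * (⟪v,q⟫)⁻¹ * (⟪v,r⟫)⁻¹ := by positivity
  constructor
  · intro h1; nlinarith
  · intro h1; positivity

lemma dd_ne_zero (v p q r : E3) (hp : 0 < ⟪v,p⟫) (hq : 0 < ⟪v,q⟫) (hr : 0 < ⟪v,r⟫)
    (h : det3 p q r ≠ 0) : Dd v p q r ≠ 0 := by
  rw [dd_eq]
  have h1 : (⟪v,p⟫)⁻¹ ≠ 0 := by positivity
  have h2 : (⟪v,q⟫)⁻¹ ≠ 0 := by positivity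
  have h3 : (⟪v,r⟫)⁻¹ ≠ 0 := by positivity
  exact mul_ne_zero (mul_ne_zero (mul_ne_zero h1 h2) h3) h

lemma dd_cyc (v p q r : E3) : Dd v q r p = Dd v p q r := det3_cyc _ _ _
lemma dd_swap12 (v p q r : E3) : Dd v q p r = -Dd v p q r := det3_swap12 _ _ _
lemma dd_swap13 (v p q r : E3) : Dd v r q p = -Dd v p q r := det3_swap13 _ _ _
lemma dd_swap23 (v p q r : E3) : Dd v p r q = -Dd v p q r := det3_swap23 _ _ _

/-- Cramer identity, universal. -/
lemma cramer3 (x y z p : E3) (i : Fin 3) :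
    det3 x y z * p i = det3 p y z * x i + det3 x p z * y i + det3 x y p * z i := by
  fin_cases i
  · show det3 x y z * p 0 = det3 p y z * x 0 + det3 x p z * y 0 + det3 x y p * z 0
    simp only [det3_eq]; ring
  · show det3 x y z * p 1 = det3 p y z * x 1 + det3 x p z * y 1 + det3 x y p * z 1
    simp only [det3_eq]; ring
  · show det3 x y z * p 2 = det3 p y z * x 2 + det3 x p z * y 2 + det3 x y p * z 2
    simp only [det3_eq]; ring

lemma cramer_dd (v q x y z : E3) (i : Fin 3) :
    Dd v x y z * prj v q i
      = Dd v q y z * prj v x i + Dd v q z x * prj v y i + Dd v q x y * prj v z i := by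
  have h := cramer3 (prj v x) (prj v y) (prj v z) (prj v q) i
  rw [Dd, Dd, Dd, Dd, h]
  rw [show det3 (prj v x) (prj v q) (prj v z) = det3 (prj v q) (prj v z) (prj v x) from
    (det3_cyc _ _ _).symm, show det3 (prj v x) (prj v y) (prj v q) = det3 (prj v q) (prj v x) (prj v y) from
    (det3_cyc _ _ _)]

/-- linearity of det3 in the third slot, weighted-combination form -/
lemma det3_lin3 (P Q C X Y Z : E3) (Δ a b c : ℝ)
    (h : ∀ i, Δ * C i = a * X i + b * Y i + c * Z i) :
    Δ * det3 P Q C = a * det3 P Q X + b * det3 P Q Y + c * det3 P Q Z := by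
  have h0 := h 0; have h1 := h 1; have h2 := h 2
  simp only [det3_eq]
  linear_combination h0 * (P 1 * Q 2 - P 2 * Q 1) + h1 * (P 2 * Q 0 - P 0 * Q 2)
    + h2 * (P 0 * Q 1 - P 1 * Q 0)

/-- sum of barycentric weights: the coplanarity identity. -/
lemma dd_sum (v q x y z : E3) (hq : 0 < ⟪v,q⟫) (hx : 0 < ⟪v,x⟫) (hy : 0 < ⟪v,y⟫)
    (hz : 0 < ⟪v,z⟫) :
    Dd v x y z = Dd v q y z + Dd v q z x + Dd v q x y := by
  have h0 := cramer_dd v q x y z 0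
  have h1 := cramer_dd v q x y z 1
  have h2 := cramer_dd v q x y z 2
  have iq := inner_prj v q hq
  have ix := inner_prj v x hx
  have iy := inner_prj v y hy
  have iz := inner_prj v z hz
  rw [inner3] at iq ix iy iz
  linear_combination v 0 * h0 + v 1 * h1 + v 2 * h2 - Dd v x y z * iq
    + Dd v q y z * ix + Dd v q z x * iy + Dd v q x y * iz

lemma prj_inj (v x y : E3) (hx : 0 < ⟪v,x⟫) (hy : 0 < ⟪v,y⟫)
    (hxs : x ∈ Metric.sphere (0:E3) 1) (hys : y ∈ Metric.sphere (0:E3) 1)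
    (h : prj v x = prj v y) : x = y := by
  rw [mem_sphere_zero_iff_norm] at hxs hys
  have hx' : (⟪v,x⟫)⁻¹ ≠ 0 := by positivity
  have key : x = (⟪v,x⟫ * (⟪v,y⟫)⁻¹) • y := by
    have h1 : ⟪v,x⟫ • prj v x = x := by
      rw [prj, smul_smul, mul_inv_cancel₀ (ne_of_gt hx), one_smul]
    have h2 : ⟪v,x⟫ • prj v y = (⟪v,x⟫ * (⟪v,y⟫)⁻¹) • y := by rw [prj, smul_smul]
    rw [← h2, ← h, h1]
  have hn : ‖x‖ = |⟪v,x⟫ * (⟪v,y⟫)⁻¹| * ‖y‖ := by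
    conv_lhs => rw [key]
    rw [norm_smul, Real.norm_eq_abs]
  have hpos : 0 < ⟪v,x⟫ * (⟪v,y⟫)⁻¹ := by positivity
  rw [hxs, hys, mul_one, abs_of_pos hpos] at hn
  rw [key, ← hn, one_smul]

/-- convexity helper -/
lemma conv_max (a b c xx yy zz mm : ℝ) (ha : 0 < a) (hb : 0 < b) (hc : 0 < c)
    (h : (a + b + c) * mm = a * xx + b * yy + c * zz)
    (h1 : xx ≤ mm) (h2 : yy ≤ mm) (h3 : zz ≤ mm) : xx = mm ∧ yy = mm ∧ zz = mm := by
  refine ⟨by nlinarith, by nlinarith, by nlinarith⟩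

lemma ne_of_dd_pos {v a b c : E3} (h : 0 < Dd v a b c) : a ≠ b ∧ a ≠ c ∧ b ≠ c := by
  refine ⟨?_, ?_, ?_⟩ <;> rintro rfl
  · rw [Dd, det3_self12] at h; exact lt_irrefl 0 h
  · rw [Dd, det3_self13] at h; exact lt_irrefl 0 h
  · rw [Dd, det3_self23] at h; exact lt_irrefl 0 h

lemma sum3_pos {a b c t1 t2 t3 : ℝ} (ha : 0 < a) (hb : 0 < b) (hc : 0 < c)
    (h1 : 0 ≤ t1) (h2 : 0 ≤ t2) (h3 : 0 ≤ t3) (hpos : 0 < t1 ∨ 0 < t2 ∨ 0 < t3)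
    (hsum : 0 = a * t1 + b * t2 + c * t3) : False := by
  rcases hpos with h | h | h
  · nlinarith [mul_pos ha h, mul_nonneg hb.le h2, mul_nonneg hc.le h3]
  · nlinarith [mul_pos hb h, mul_nonneg ha.le h1, mul_nonneg hc.le h3]
  · nlinarith [mul_pos hc h, mul_nonneg ha.le h1, mul_nonneg hb.le h2]

/-- `q` is the hull-successor of `p`: every other point of `A` lies strictly
to the left of the directed line `p → q`. -/
def IsSucc (v : E3) (A : Set E3) (p q : E3) : Prop :=
  p ∈ A ∧ q ∈ A ∧ p ≠ q ∧ ∀ r ∈ A, r ≠ p → r ≠ q → 0 < Dd v p q r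

/-- hull vertices: points of `A` contained in no triangle of points of `A`. -/
def Hull (v : E3) (A : Set E3) : Set E3 :=
  {p : E3 | p ∈ A ∧
    ¬ ∃ x ∈ A, ∃ y ∈ A, ∃ z ∈ A, 0 < Dd v p x y ∧ 0 < Dd v p y z ∧ 0 < Dd v p z x}

section Main

variable {v : E3} {A : Set E3}

lemma dd_nz (hv : ∀ p ∈ A, 0 < ⟪v, p⟫) (hgp : GenPos A) {p q r : E3}
    (hp : p ∈ A) (hq : q ∈ A) (hr : r ∈ A) (hpq : p ≠ q) (hpr : p ≠ r) (hqr : q ≠ r) :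
    Dd v p q r ≠ 0 :=
  dd_ne_zero v p q r (hv p hp) (hv q hq) (hv r hr) (hgp p hp q hq r hr hpq hpr hqr)

lemma hull_trans (hv : ∀ p ∈ A, 0 < ⟪v, p⟫) (hgp : GenPos A) {p x y z : E3}
    (hp : p ∈ Hull v A) (hx : x ∈ A) (hy : y ∈ A) (hz : z ∈ A)
    (h1 : 0 < Dd v p x y) (h2 : 0 < Dd v p y z) : 0 < Dd v p x z := by
  obtain ⟨hpx, -, hxy⟩ := ne_of_dd_pos h1
  obtain ⟨-, hpz, hyz⟩ := ne_of_dd_pos h2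
  have hxz : x ≠ z := by
    rintro rfl
    rw [show Dd v p y x = -Dd v p x y from dd_swap23 v p x y] at h2
    linarith
  have hne := dd_nz hv hgp hp.1 hx hz hpx hpz hxz
  rcases lt_trichotomy (Dd v p x z) 0 with hlt | he | hgt
  · exfalso
    exact hp.2 ⟨x, hx, y, hy, z, hz, h1, h2, by rw [dd_swap23 v p x z]; linarith⟩
  · exact absurd he hne
  · exact hgt

lemma succ_exists (hfin : A.Finite) (hv : ∀ p ∈ A, 0 < ⟪v, p⟫) (hgp : GenPos A)
    {p : E3} (hp : p ∈ Hull v A) (hex : ∃ x ∈ A, x ≠ p) : ∃ q, IsSucc v A p q := by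
  have hS : (A \ {p}).Finite := hfin.subset Set.diff_subset
  set F := hS.toFinset with hF
  have hFne : F.Nonempty := by
    obtain ⟨x, hx, hxp⟩ := hex
    exact ⟨x, by simp [hF, hx, hxp]⟩
  obtain ⟨q, hqF, hmin⟩ :=
    F.exists_min_image (fun w => (F.filter (fun y => 0 < Dd v p y w)).card) hFne
  have hqS : q ∈ A \ {p} := by simpa [hF] using hqF
  refine ⟨q, hp.1, hqS.1, fun h => hqS.2 (by simp [h]), ?_⟩
  intro r hr hrp hrq
  by_contra hcon
  have hne := dd_nz hv hgp hp.1 hqS.1 hr (fun h => hqS.2 (by simp [h])) (Ne.symm hrp) (Ne.symm hrq)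
  have hlt : Dd v p q r < 0 := lt_of_le_of_ne (not_lt.mp hcon) hne
  have hrq' : 0 < Dd v p r q := by
    rw [dd_swap23 v p q r]; linarith
  have hrF : r ∈ F := by simp [hF, hr, hrp]
  have hsub : F.filter (fun y => 0 < Dd v p y r) ⊆ F.filter (fun y => 0 < Dd v p y q) := by
    intro y hy
    rw [Finset.mem_filter] at hy ⊢
    refine ⟨hy.1, ?_⟩
    have hyS : y ∈ A \ {p} := by simpa [hF] using hy.1
    exact hull_trans hv hgp hp ((by simpa [hF] using hy.1 : y ∈ A \ {p}).1) hr hqS.1 hy.2 hrq'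
  have hss : F.filter (fun y => 0 < Dd v p y r) ⊂ F.filter (fun y => 0 < Dd v p y q) := by
    refine (Finset.ssubset_iff_of_subset hsub).mpr ⟨r, ?_, ?_⟩
    · rw [Finset.mem_filter]; exact ⟨hrF, hrq'⟩
    · rw [Finset.mem_filter]
      rintro ⟨-, hbad⟩
      rw [Dd, det3_self23] at hbad
      exact lt_irrefl 0 hbad
  exact absurd (hmin r hrF) (not_le.mpr (Finset.card_lt_card hss))

lemma succ_unique {p q q' : E3} (h1 : IsSucc v A p q) (h2 : IsSucc v A p q') : q = q' := by
  by_contra hne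
  have a1 : 0 < Dd v p q q' := h1.2.2.2 q' h2.2.1 (Ne.symm h2.2.2.1) (Ne.symm hne)
  have a2 : 0 < Dd v p q' q := h2.2.2.2 q h1.2.1 (Ne.symm h1.2.2.1) hne
  rw [dd_swap23 v p q q'] at a2
  linarith

lemma succ_inj {p p' q : E3} (h1 : IsSucc v A p q) (h2 : IsSucc v A p' q) : p = p' := by
  by_contra hne
  have a1 : 0 < Dd v p q p' := h1.2.2.2 p' h2.1 (Ne.symm hne) h2.2.2.1
  have a2 : 0 < Dd v p' q p := h2.2.2.2 p h1.1 hne h1.2.2.1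
  rw [dd_swap13 v p q p'] at a2
  linarith

lemma mem_hull_of_succ (hgp : GenPos A) {p q : E3} (hs : IsSucc v A p q) {w : E3}
    (hw : w = p ∨ w = q) : w ∈ Hull v A := by
  have hwA : w ∈ A := by rcases hw with rfl | rfl; exacts [hs.1, hs.2.1]
  refine ⟨hwA, ?_⟩
  rintro ⟨x, hx, y, hy, z, hz, h1, h2, h3⟩
  obtain ⟨hwx, hwy, hxy⟩ := ne_of_dd_pos h1
  obtain ⟨-, hwz, hyz⟩ := ne_of_dd_pos h2
  have hxz : x ≠ z := (ne_of_dd_pos h3).2.2.symm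
  -- barycentric expansion
  have hcr : ∀ i, Dd v x y z * prj v w i
      = Dd v w y z * prj v x i + Dd v w z x * prj v y i + Dd v w x y * prj v z i :=
    cramer_dd v w x y z
  have hlin := det3_lin3 (prj v p) (prj v q) (prj v w) (prj v x) (prj v y) (prj v z)
    (Dd v x y z) (Dd v w y z) (Dd v w z x) (Dd v w x y) hcr
  have hzero : det3 (prj v p) (prj v q) (prj v w) = 0 := by
    rcases hw with rfl | rfl
    · exact det3_self13 _ _
    · exact det3_self23 _ _
  rw [hzero, mul_zero] at hlin
  have hnn : ∀ t, t ∈ A → 0 ≤ Dd v p q t := by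
    intro t ht
    by_cases htp : t = p
    · subst htp; rw [Dd, det3_self13]
    by_cases htq : t = q
    · subst htq; rw [Dd, det3_self23]
    exact (hs.2.2.2 t ht htp htq).le
  have hone : (x ≠ p ∧ x ≠ q) ∨ (y ≠ p ∧ y ≠ q) ∨ (z ≠ p ∧ z ≠ q) := by
    by_cases hxc : x ≠ p ∧ x ≠ q
    · exact Or.inl hxc
    by_cases hyc : y ≠ p ∧ y ≠ q
    · exact Or.inr (Or.inl hyc)
    by_cases hzc : z ≠ p ∧ z ≠ q
    · exact Or.inr (Or.inr hzc)
    exfalso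
    rw [not_and_or, not_ne_iff, not_ne_iff] at hxc hyc hzc
    rcases hxc with rfl | rfl <;> rcases hyc with rfl | rfl <;> rcases hzc with rfl | rfl <;>
      first
        | exact hxy rfl
        | exact hyz rfl
        | exact hxz rfl
  have hpos : 0 < Dd v p q x ∨ 0 < Dd v p q y ∨ 0 < Dd v p q z := by
    rcases hone with ⟨ha, hb⟩ | ⟨ha, hb⟩ | ⟨ha, hb⟩
    · exact Or.inl (hs.2.2.2 x hx ha hb)
    · exact Or.inr (Or.inl (hs.2.2.2 y hy ha hb))
    · exact Or.inr (Or.inr (hs.2.2.2 z hz ha hb))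
  exact sum3_pos h2 h3 h1 (hnn x hx) (hnn y hy) (hnn z hz) hpos hlin

end Main

section Rev

variable {v : E3} {A : Set E3} {f : E3 → E3}

lemma sign_eq_neg_one_of {x : ℝ} (h : Real.sign x = -1) : x < 0 := by
  rcases lt_trichotomy x 0 with h1 | h1 | h1
  · exact h1
  · rw [h1, Real.sign_zero] at h; norm_num at h
  · rw [Real.sign_of_pos h1] at h; norm_num at h

lemma rev_neg (hv : ∀ p ∈ A, 0 < ⟪v, p⟫) (hgp : GenPos A) (hbij : Set.BijOn f A A)
    (hrev : ∀ p ∈ A, ∀ q ∈ A, ∀ r ∈ A, sgn3 (f p) (f q) (f r) = -sgn3 p q r)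
    {p q r : E3} (hp : p ∈ A) (hq : q ∈ A) (hr : r ∈ A)
    (hpq : p ≠ q) (hpr : p ≠ r) (hqr : q ≠ r)
    (h : 0 < Dd v p q r) : 0 < Dd v (f q) (f p) (f r) := by
  have hdet : 0 < det3 p q r := (dd_pos_iff v p q r (hv p hp) (hv q hq) (hv r hr)).mp h
  have hs := hrev p hp q hq r hr
  rw [sgn3, sgn3, Real.sign_of_pos hdet] at hs
  have hneg : det3 (f p) (f q) (f r) < 0 := sign_eq_neg_one_of hs
  have hpos : 0 < det3 (f q) (f p) (f r) := by
    rw [det3_swap12]; linarith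
  exact (dd_pos_iff v (f q) (f p) (f r) (hv _ (hbij.mapsTo hq)) (hv _ (hbij.mapsTo hp))
    (hv _ (hbij.mapsTo hr))).mpr hpos

end Rev

lemma hull_nonempty {v : E3} {A : Set E3} (hfin : A.Finite)
    (hsph : A ⊆ Metric.sphere (0 : E3) 1) (hv : ∀ p ∈ A, 0 < ⟪v, p⟫)
    (hne : A.Nonempty) : (Hull v A).Nonempty := by
  classical
  set F := hfin.toFinset with hFdef
  have hFne : F.Nonempty := by
    obtain ⟨x, hx⟩ := hne
    exact ⟨x, by simp [hFdef, hx]⟩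
  obtain ⟨p0, hp0F, hmax0⟩ := F.exists_max_image (fun w => prj v w 0) hFne
  set F1 := F.filter (fun w => prj v w 0 = prj v p0 0) with hF1def
  obtain ⟨p1, hp1F, hmax1⟩ := F1.exists_max_image (fun w => prj v w 1)
    ⟨p0, by simp [hF1def, hp0F]⟩
  set F2 := F1.filter (fun w => prj v w 1 = prj v p1 1) with hF2def
  obtain ⟨p, hpF2, hmax2⟩ := F2.exists_max_image (fun w => prj v w 2)
    ⟨p1, by simp [hF2def, hp1F]⟩
  have hpF1 : p ∈ F1 := (Finset.mem_filter.mp hpF2).1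
  have hp1c : prj v p 1 = prj v p1 1 := (Finset.mem_filter.mp hpF2).2
  have hp0c : prj v p 0 = prj v p0 0 := (Finset.mem_filter.mp hpF1).2
  have hpA : p ∈ A := by
    have := (Finset.mem_filter.mp hpF1).1
    simpa [hFdef] using this
  have m0 : ∀ x ∈ A, prj v x 0 ≤ prj v p 0 := by
    intro x hx
    rw [hp0c]
    exact hmax0 x (by simp [hFdef, hx])
  have m1 : ∀ x ∈ A, prj v x 0 = prj v p 0 → prj v x 1 ≤ prj v p 1 := by
    intro x hx he
    rw [hp1c]
    exact hmax1 x (Finset.mem_filter.mpr ⟨by simp [hFdef, hx], by rw [he, hp0c]⟩)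
  have m2 : ∀ x ∈ A, prj v x 0 = prj v p 0 → prj v x 1 = prj v p 1 → prj v x 2 ≤ prj v p 2 := by
    intro x hx he0 he1
    refine hmax2 x (Finset.mem_filter.mpr ⟨Finset.mem_filter.mpr
      ⟨by simp [hFdef, hx], by rw [he0, hp0c]⟩, by rw [he1, hp1c]⟩)
  refine ⟨p, hpA, ?_⟩
  rintro ⟨x, hx, y, hy, z, hz, h1, h2, h3⟩
  obtain ⟨hpx, hpy, hxy⟩ := ne_of_dd_pos h1
  have hcr := cramer_dd v p x y z
  have hsum := dd_sum v p x y z (hv p hpA) (hv x hx) (hv y hy) (hv z hz)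
  have hcomb : ∀ i, (Dd v p y z + Dd v p z x + Dd v p x y) * prj v p i
      = Dd v p y z * prj v x i + Dd v p z x * prj v y i + Dd v p x y * prj v z i := by
    intro i; rw [← hsum]; exact hcr i
  obtain ⟨e0x, e0y, e0z⟩ := conv_max _ _ _ _ _ _ _ h2 h3 h1 (hcomb 0)
    (m0 x hx) (m0 y hy) (m0 z hz)
  obtain ⟨e1x, e1y, e1z⟩ := conv_max _ _ _ _ _ _ _ h2 h3 h1 (hcomb 1)
    (m1 x hx e0x) (m1 y hy e0y) (m1 z hz e0z)
  obtain ⟨e2x, e2y, e2z⟩ := conv_max _ _ _ _ _ _ _ h2 h3 h1 (hcomb 2)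
    (m2 x hx e0x e1x) (m2 y hy e0y e1y) (m2 z hz e0z e1z)
  have hxyeq : prj v x = prj v y := by
    ext i
    fin_cases i
    · show prj v x 0 = prj v y 0
      rw [e0x, e0y]
    · show prj v x 1 = prj v y 1
      rw [e1x, e1y]
    · show prj v x 2 = prj v y 2
      rw [e2x, e2y]
  exact hxy (prj_inj v x y (hv x hx) (hv y hy) (hsph hx) (hsph hy) hxyeq)

theorem key_induction : ∀ (n : ℕ) (A : Set E3), A.ncard ≤ n → IsAffineSet A → GenPos A →
    ∀ f : E3 → E3, Set.BijOn f A A →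
    (∀ p ∈ A, ∀ q ∈ A, ∀ r ∈ A, sgn3 (f p) (f q) (f r) = -sgn3 p q r) →
    ∀ p ∈ A, f (f p) = p := by
  intro n
  induction n with
  | zero =>
    intro A hcard hA hgp f hbij hrev p hp
    rw [(Set.ncard_eq_zero hA.1).mp (Nat.le_zero.mp hcard)] at hp
    exact absurd hp (Set.notMem_empty p)
  | succ n ih =>
    intro A hcard hA hgp f hbij hrev
    classical
    obtain ⟨hfin, hsph, v, hv⟩ := hA
    by_cases hsmall : A.ncard ≤ 2
    · -- at most two points: any bijection is an involution
      intro p hp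
      by_cases hfp : f p = p
      · rw [hfp, hfp]
      by_cases hffp : f (f p) = p
      · exact hffp
      exfalso
      have hfpA : f p ∈ A := hbij.mapsTo hp
      have hffA : f (f p) ∈ A := hbij.mapsTo hfpA
      have hffq : f (f p) ≠ f p := fun h => hfp (hbij.injOn hfpA hp h)
      have hss : ({p, f p, f (f p)} : Set E3) ⊆ A := by
        intro w hw
        rcases hw with rfl | rfl | rfl
        exacts [hp, hfpA, hffA]
      have hnm : p ∉ ({f p, f (f p)} : Set E3) := by
        simp only [Set.mem_insert_iff, Set.mem_singleton_iff]
        push_neg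
        exact ⟨fun h => hfp h.symm, fun h => hffp h.symm⟩
      have h33 : ({p, f p, f (f p)} : Set E3).ncard = 3 := by
        rw [Set.ncard_insert_of_notMem hnm (Set.toFinite _), Set.ncard_pair hffq.symm]
      have h3le : 3 ≤ A.ncard := h33 ▸ Set.ncard_le_ncard hss hfin
      omega
    push_neg at hsmall
    have hAne : A.Nonempty := Set.nonempty_of_ncard_ne_zero (by omega)
    set H := Hull v A with hHdef
    have hHsub : H ⊆ A := fun x hx => hx.1
    have hHne : H.Nonempty := hull_nonempty hfin hsph hv hAne
    have hHfin : H.Finite := hfin.subset hHsub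
    set s : E3 → E3 := fun p => if h : ∃ q, IsSucc v A p q then h.choose else p with hsdef
    have hsucc : ∀ p ∈ H, IsSucc v A p (s p) := by
      intro p hp
      have hex : ∃ x ∈ A, x ≠ p := by
        by_contra hno
        push_neg at hno
        have hsub1 : A ⊆ {p} := fun x hx => hno x hx
        have := Set.ncard_le_ncard hsub1 (Set.finite_singleton p)
        rw [Set.ncard_singleton] at this
        omega
      have hex2 : ∃ q, IsSucc v A p q := succ_exists hfin hv hgp hp hex
      have : s p = hex2.choose := by rw [hsdef]; exact dif_pos hex2
      rw [this]
      exact hex2.choose_spec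
    have hsH : ∀ p ∈ H, s p ∈ H := fun p hp =>
      mem_hull_of_succ hgp (hsucc p hp) (Or.inr rfl)
    have hsiter : ∀ (j : ℕ), ∀ p ∈ H, s^[j] p ∈ H := by
      intro j
      induction j with
      | zero => intro p hp; simpa using hp
      | succ j hj =>
        intro p hp
        rw [Function.iterate_succ_apply']
        exact hsH _ (hj p hp)
    have hsinj : ∀ p ∈ H, ∀ p' ∈ H, s p = s p' → p = p' := by
      intro p hp p' hp' he
      exact succ_inj (hsucc p hp) (he ▸ hsucc p' hp')
    have hsiterinj : ∀ (j : ℕ), ∀ p ∈ H, ∀ p' ∈ H, s^[j] p = s^[j] p' → p = p' := by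
      intro j
      induction j with
      | zero => intro p _ p' _ h; simpa using h
      | succ j hj =>
        intro p hp p' hp' he
        rw [Function.iterate_succ_apply', Function.iterate_succ_apply'] at he
        exact hj p hp p' hp' (hsinj _ (hsiter j p hp) _ (hsiter j p' hp') he)
    have hrevsucc : ∀ p q, IsSucc v A p q → IsSucc v A (f q) (f p) := by
      intro p q hpq
      have hpA := hpq.1
      have hqA := hpq.2.1
      refine ⟨hbij.mapsTo hqA, hbij.mapsTo hpA, ?_, ?_⟩
      · intro h
        exact hpq.2.2.1 (hbij.injOn hqA hpA h).symm
      · intro r' hr' h1 h2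
        obtain ⟨r, hr, hfr⟩ := hbij.surjOn hr'
        have hrp : r ≠ p := fun h => h2 (by rw [← hfr, h])
        have hrq : r ≠ q := fun h => h1 (by rw [← hfr, h])
        have hpos := hpq.2.2.2 r hr hrp hrq
        rw [← hfr]
        exact rev_neg hv hgp hbij hrev hpA hqA hr hpq.2.2.1 (Ne.symm hrp) (Ne.symm hrq) hpos
    have hfH : ∀ p ∈ H, f p ∈ H := fun p hp =>
      mem_hull_of_succ hgp (hrevsucc p (s p) (hsucc p hp)) (Or.inr rfl)
    -- f ∘ f = id on H
    have hinv : ∀ p ∈ H, f (f p) = p := by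
      intro p hp
      have hfpH : f p ∈ H := hfH p hp
      have horbit : ∃ a : ℕ, s^[a] p = f p := by
        by_contra hno
        push_neg at hno
        have hper : ∃ m, 0 < m ∧ s^[m] p = p := by
          have hninj : ¬ Function.Injective (fun j : ℕ => s^[j] p) := by
            intro hinj
            exact Set.not_infinite.mpr hHfin
              (Set.infinite_of_injective_forall_mem hinj (fun j => hsiter j p hp))
          rw [Function.not_injective_iff] at hninj
          obtain ⟨i, j, heq, hne⟩ := hninj
          have hcase : ∀ i j : ℕ, i < j → s^[i] p = s^[j] p → ∃ m, 0 < m ∧ s^[m] p = p := by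
            intro i j hij he
            have h1 : s^[i] (s^[j - i] p) = s^[i] p := by
              rw [← Function.iterate_add_apply, show i + (j - i) = j from by omega]
              exact he.symm
            exact ⟨j - i, by omega,
              hsiterinj i _ (hsiter _ p hp) p hp h1⟩
          rcases lt_or_gt_of_ne hne with h | h
          exacts [hcase i j h heq, hcase j i h heq.symm]
        obtain ⟨m, hm0, hmp⟩ := hper
        have hPex : ∃ k, 0 < k ∧ s^[k] p = p := ⟨m, hm0, hmp⟩
        set m0 := Nat.find hPex with hm0def
        obtain ⟨hm00, hm0p⟩ := Nat.find_spec hPex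
        rw [← hm0def] at hm00 hm0p
        have hminm : ∀ k, 0 < k → k < m0 → s^[k] p ≠ p := fun k h1 h2 h3 =>
          Nat.find_min hPex h2 ⟨h1, h3⟩
        set c : ℕ → E3 := fun j => s^[j] p with hcdef
        have hc0 : c 0 = p := rfl
        have hcH : ∀ j, c j ∈ H := fun j => hsiter j p hp
        have hcA : ∀ j, c j ∈ A := fun j => hHsub (hcH j)
        have hcinjaux : ∀ i j, i < j → j < m0 → c i = c j → False := by
          intro i j hij hj he
          have h2 : s^[m0 - j] (c j) = p := by
            rw [hcdef]
            simp only
            rw [← Function.iterate_add_apply, show m0 - j + j = m0 from by omega]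
            exact hm0p
          have h4 : s^[(m0 - j) + i] p = p := by
            rw [Function.iterate_add_apply]
            rw [show s^[i] p = c i from rfl, he]
            exact h2
          exact hminm _ (by omega) (by omega) h4
        have hedge : ∀ j, IsSucc v A (c j) (c (j + 1)) := by
          intro j
          have hcs : c (j + 1) = s (c j) := Function.iterate_succ_apply' s j p
          rw [hcs]
          exact hsucc (c j) (hcH j)
        have hxc : ∀ j, f p ≠ c j := fun j h => hno j h.symm
        have hfpA : f p ∈ A := hHsub hfpH
        have hm1 : m0 ≠ 1 := by
          intro h1
          have hsp : s p = p := by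
            have := hm0p
            rw [h1] at this
            simpa using this
          exact (hsucc p hp).2.2.1 hsp.symm
        have hm2 : m0 ≠ 2 := by
          intro h2
          have e0 := hedge 0
          have e1 := hedge 1
          have hc2 : c 2 = c 0 := by
            rw [hcdef]
            simp only
            rw [show (2 : ℕ) = m0 from h2.symm, hm0p]
            rfl
          rw [hc2] at e1
          have q1 : 0 < Dd v (c 0) (c 1) (f p) :=
            e0.2.2.2 (f p) hfpA (hxc 0) (hxc 1)
          have q2 : 0 < Dd v (c 1) (c 0) (f p) :=
            e1.2.2.2 (f p) hfpA (hxc 1) (hxc 0)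
          rw [dd_swap12] at q2
          linarith
        have hm3 : 3 ≤ m0 := by omega
        set T : ℕ → ℝ := fun j => Dd v (c 0) (c j) (f p) with hTdef
        have hT1 : 0 < T 1 := (hedge 0).2.2.2 (f p) hfpA (hxc 0) (hxc 1)
        have hTm : T (m0 - 1) < 0 := by
          have e := hedge (m0 - 1)
          have hcm : c (m0 - 1 + 1) = c 0 := by
            rw [hcdef]
            simp only
            rw [show m0 - 1 + 1 = m0 from by omega, hm0p]
            rfl
          rw [hcm] at e
          have hq : 0 < Dd v (c (m0 - 1)) (c 0) (f p) :=
            e.2.2.2 (f p) hfpA (hxc (m0 - 1)) (hxc 0)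
          have := dd_swap12 v (c (m0 - 1)) (c 0) (f p)
          rw [hTdef]
          simp only
          linarith
        have hkex : ∃ k, 2 ≤ k ∧ k ≤ m0 - 1 ∧ T k < 0 := ⟨m0 - 1, by omega, le_refl _, hTm⟩
        set k0 := Nat.find hkex with hk0def
        obtain ⟨hk2, hkm, hkneg⟩ := Nat.find_spec hkex
        rw [← hk0def] at hk2 hkm hkneg
        have hkmin : ∀ k, 2 ≤ k → k ≤ m0 - 1 → k < k0 → ¬ T k < 0 := fun k h1 h2 h3 h4 =>
          Nat.find_min hkex h3 ⟨h1, h2, h4⟩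
        set j := k0 - 1 with hjdef
        have hj1 : 1 ≤ j := by omega
        have hjm : j ≤ m0 - 2 := by omega
        have hcj0 : c j ≠ c 0 := fun h => hcinjaux 0 j (by omega) (by omega) h.symm
        have hcj10 : c (j + 1) ≠ c 0 := fun h => hcinjaux 0 (j + 1) (by omega) (by omega) h.symm
        have hTj : 0 < T j := by
          rcases eq_or_ne j 1 with hj11 | hj11
          · rw [hj11]; exact hT1
          · have hTne : T j ≠ 0 :=
              dd_nz hv hgp (hcA 0) (hcA j) hfpA (Ne.symm hcj0) (Ne.symm (hxc 0)) (Ne.symm (hxc j))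
            have hnneg := hkmin j (by omega) (by omega) (by omega)
            rcases lt_trichotomy (T j) 0 with h' | h' | h'
            · exact absurd h' hnneg
            · exact absurd h' hTne
            · exact h'
        have hj1k : j + 1 = k0 := by omega
        refine hfpH.2 ⟨c 0, hcA 0, c j, hcA j, c (j + 1), hcA (j + 1), ?_, ?_, ?_⟩
        · have := dd_cyc v (f p) (c 0) (c j)
          rw [hTdef] at hTj
          simp only at hTj
          linarith
        · have hq := (hedge j).2.2.2 (f p) hfpA (hxc j) (hxc (j + 1))
          have := dd_cyc v (f p) (c j) (c (j + 1))
          linarith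
        · have hkn : Dd v (c 0) (c (j + 1)) (f p) < 0 := by
            rw [hj1k]
            exact hkneg
          have := dd_swap13 v (c 0) (c (j + 1)) (f p)
          linarith
      obtain ⟨a, ha⟩ := horbit
      have hrel : ∀ (j : ℕ), ∀ q ∈ H, s^[j] (f (s^[j] q)) = f q := by
        intro j
        induction j with
        | zero => intro q hq; rfl
        | succ j hj =>
          intro q hq
          have hq' : s^[j] q ∈ H := hsiter j q hq
          have hstep : s (f (s (s^[j] q))) = f (s^[j] q) := by
            have h2 := hrevsucc _ _ (hsucc _ hq')
            have h3 : f (s (s^[j] q)) ∈ H := mem_hull_of_succ hgp h2 (Or.inl rfl)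
            exact succ_unique (hsucc _ h3) h2
          calc s^[j + 1] (f (s^[j + 1] q))
              = s^[j] (s (f (s (s^[j] q)))) := by
                rw [Function.iterate_succ_apply' s j q, Function.iterate_succ_apply]
            _ = s^[j] (f (s^[j] q)) := by rw [hstep]
            _ = f q := hj q hq
      have h5 : s^[a] (f (f p)) = f p := by
        have := hrel a p hp
        rwa [ha] at this
      have h6 : s^[a] (f (f p)) = s^[a] p := by rw [h5, ← ha]
      exact hsiterinj a _ (hfH _ hfpH) _ hp h6
    -- peel off the hull and induct
    have hHim : f '' H = H := by
      apply Set.eq_of_subset_of_ncard_le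
      · intro y hy
        obtain ⟨x, hx, rfl⟩ := hy
        exact hfH x hx
      · rw [Set.ncard_image_of_injOn (hbij.injOn.mono hHsub)]
      · exact hHfin
    set B := A \ H with hBdef
    have hBsub : B ⊆ A := Set.diff_subset
    have hBfin : B.Finite := hfin.subset hBsub
    have hmemB : ∀ x ∈ B, f x ∈ B := by
      intro x hx
      refine ⟨hbij.mapsTo hx.1, fun hfxH => ?_⟩
      rw [← hHim] at hfxH
      obtain ⟨h', hh', he⟩ := hfxH
      exact hx.2 (by rwa [hbij.injOn (hHsub hh') hx.1 he] at hh')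
    have hbijB : Set.BijOn f B B := by
      refine ⟨hmemB, hbij.injOn.mono hBsub, ?_⟩
      intro y hy
      obtain ⟨x, hxA, hfx⟩ := hbij.surjOn hy.1
      refine ⟨x, ⟨hxA, fun hxH => hy.2 ?_⟩, hfx⟩
      rw [← hfx, ← hHim]
      exact ⟨x, hxH, rfl⟩
    have hBcard : B.ncard ≤ n := by
      obtain ⟨h0, hh0⟩ := hHne
      have hss : B ⊂ A := (Set.ssubset_iff_of_subset hBsub).mpr
        ⟨h0, hHsub hh0, fun hb => hb.2 hh0⟩
      have := Set.ncard_lt_ncard hss hfin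
      omega
    have hIH := ih B hBcard ⟨hBfin, fun x hx => hsph (hBsub hx), v, fun q hq => hv q (hBsub hq)⟩
      (fun a ha b hb c hc => hgp a (hBsub ha) b (hBsub hb) c (hBsub hc))
      f hbijB
      (fun a ha b hb c hc => hrev a (hBsub ha) b (hBsub hb) c (hBsub hc))
    intro p hp
    by_cases hpH : p ∈ H
    · exact hinv p hpH
    · exact hIH p ⟨hp, hpH⟩


/-- An orientation reversing permutation of a finite affine point set in
general position on the sphere is an involution. -/
theorem stmt2 (A : Set E3) (hA : IsAffineSet A) (hgp : GenPos A)
    (f : E3 → E3) (hbij : Set.BijOn f A A)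
    (hrev : ∀ p ∈ A, ∀ q ∈ A, ∀ r ∈ A, sgn3 (f p) (f q) (f r) = -sgn3 p q r) :
    ∀ p ∈ A, f (f p) = p :=
  key_induction A.ncard A le_rfl hA hgp f hbij hrev
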